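/- arXiv:2008.13374 — 2 statements merged into one kernel-verified Lean document; each statement's English description precedes it below -/
import Mathlib

section
/- Let S = {x₁,…,x_N} ⊂ ℝ^d be a finite set and for a matrix A define p_{S,A}(x_i, x) = K_A(x_i,x) / Σ_{j=1}^N K_A(x_j,x), where K_A(x,y) = 1/(1+‖A(x−y)‖²). If (1+ε)^{-1}‖A2 v‖ ≤ ‖A1 v‖ ≤ (1+ε)‖A2 v‖ for all v ∈ ℝ^d, then for every query x ∈ ℝ^d and every x_i ∈ S, (1+ε)^{-4} p_{S,A2}(x_i,x) ≤ p_{S,A1}(x_i,x) ≤ (1+ε)^4 p_{S,A2}(x_i,x). -/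
open scoped BigOperators

noncomputable def kerK {d : ℕ} (A : Matrix (Fin d) (Fin d) ℝ) (x y : Fin d → ℝ) : ℝ :=
  1 / (1 + ∑ i, (A.mulVec (x - y) i) ^ 2)

noncomputable def eNorm {d : ℕ} (A : Matrix (Fin d) (Fin d) ℝ) (v : Fin d → ℝ) : ℝ :=
  Real.sqrt (∑ i, (A.mulVec v i) ^ 2)

noncomputable def pWeight {d : ℕ} (S : Finset (Fin d → ℝ))
    (A : Matrix (Fin d) (Fin d) ℝ) (xi x : Fin d → ℝ) : ℝ :=
  kerK A xi x / ∑ xj ∈ S, kerK A xj x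

lemma kerK_pos {d : ℕ} (A : Matrix (Fin d) (Fin d) ℝ) (x y : Fin d → ℝ) :
    0 < kerK A x y := by
  unfold kerK
  have h : (0:ℝ) ≤ ∑ i, (A.mulVec (x - y) i) ^ 2 :=
    Finset.sum_nonneg fun i _ => sq_nonneg _
  positivity

lemma sq_sum_le {d : ℕ} {A B : Matrix (Fin d) (Fin d) ℝ} {c : ℝ} (hc : 0 ≤ c)
    (h : ∀ v : Fin d → ℝ, eNorm A v ≤ c * eNorm B v) (v : Fin d → ℝ) :
    ∑ i, (A.mulVec v i) ^ 2 ≤ c ^ 2 * ∑ i, (B.mulVec v i) ^ 2 := by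
  have hA : (0:ℝ) ≤ ∑ i, (A.mulVec v i) ^ 2 :=
    Finset.sum_nonneg fun i _ => sq_nonneg _
  have hB : (0:ℝ) ≤ ∑ i, (B.mulVec v i) ^ 2 :=
    Finset.sum_nonneg fun i _ => sq_nonneg _
  have h1 := h v
  unfold eNorm at h1
  have h2 : Real.sqrt (∑ i, (A.mulVec v i) ^ 2) ^ 2 ≤
      (c * Real.sqrt (∑ i, (B.mulVec v i) ^ 2)) ^ 2 := by
    apply pow_le_pow_left₀ (Real.sqrt_nonneg _) h1
  rw [Real.sq_sqrt hA] at h2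
  rw [mul_pow, Real.sq_sqrt hB] at h2
  exact h2

lemma kerK_le {d : ℕ} {A B : Matrix (Fin d) (Fin d) ℝ} {c : ℝ} (hc : 1 ≤ c)
    (h : ∀ v : Fin d → ℝ, eNorm B v ≤ c * eNorm A v) (x y : Fin d → ℝ) :
    kerK A x y ≤ c ^ 2 * kerK B x y := by
  have hc0 : 0 ≤ c := le_trans zero_le_one hc
  have hs := sq_sum_le hc0 h (x - y)
  have hA : (0:ℝ) ≤ ∑ i, (A.mulVec (x-y) i) ^ 2 :=
    Finset.sum_nonneg fun i _ => sq_nonneg _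
  have hB : (0:ℝ) ≤ ∑ i, (B.mulVec (x-y) i) ^ 2 :=
    Finset.sum_nonneg fun i _ => sq_nonneg _
  unfold kerK
  rw [mul_one_div, div_le_div_iff₀ (by linarith) (by linarith)]
  have hc2 : (1:ℝ) ≤ c ^ 2 := by nlinarith
  nlinarith [hs]

theorem stmt1 {d : ℕ} (ε : ℝ) (hε : 0 ≤ ε)
    (S : Finset (Fin d → ℝ)) (hS : S.Nonempty)
    (A1 A2 : Matrix (Fin d) (Fin d) ℝ)
    (hlow : ∀ v : Fin d → ℝ, (1 + ε)⁻¹ * eNorm A2 v ≤ eNorm A1 v)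
    (hup : ∀ v : Fin d → ℝ, eNorm A1 v ≤ (1 + ε) * eNorm A2 v) :
    ∀ x : Fin d → ℝ, ∀ xi ∈ S,
      (1 + ε)⁻¹ ^ 4 * pWeight S A2 xi x ≤ pWeight S A1 xi x ∧
      pWeight S A1 xi x ≤ (1 + ε) ^ 4 * pWeight S A2 xi x := by
  intro x xi hxi
  set c := 1 + ε with hcdef
  have hc1 : (1:ℝ) ≤ c := by simp only [hcdef]; linarith
  have hc0 : (0:ℝ) < c := lt_of_lt_of_le one_pos hc1
  have hlow' : ∀ v : Fin d → ℝ, eNorm A2 v ≤ c * eNorm A1 v := by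
    intro v
    have h1 := hlow v
    have h2 : eNorm A2 v = c * (c⁻¹ * eNorm A2 v) := by
      field_simp
    rw [h2]
    exact mul_le_mul_of_nonneg_left h1 (le_of_lt hc0)
  have hK1 : ∀ y : Fin d → ℝ, kerK A1 y x ≤ c ^ 2 * kerK A2 y x :=
    fun y => kerK_le hc1 hlow' y x
  have hK2 : ∀ y : Fin d → ℝ, kerK A2 y x ≤ c ^ 2 * kerK A1 y x :=
    fun y => kerK_le hc1 hup y x
  have hsum1 : ∑ xj ∈ S, kerK A1 xj x ≤ c ^ 2 * ∑ xj ∈ S, kerK A2 xj x := by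
    rw [Finset.mul_sum]
    exact Finset.sum_le_sum fun j _ => hK1 j
  have hsum2 : ∑ xj ∈ S, kerK A2 xj x ≤ c ^ 2 * ∑ xj ∈ S, kerK A1 xj x := by
    rw [Finset.mul_sum]
    exact Finset.sum_le_sum fun j _ => hK2 j
  have hS1pos : 0 < ∑ xj ∈ S, kerK A1 xj x :=
    Finset.sum_pos (fun j _ => kerK_pos A1 j x) hS
  have hS2pos : 0 < ∑ xj ∈ S, kerK A2 xj x :=
    Finset.sum_pos (fun j _ => kerK_pos A2 j x) hS
  have hK1pos := kerK_pos A1 xi x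
  have hK2pos := kerK_pos A2 xi x
  constructor
  · unfold pWeight
    rw [mul_div_assoc', div_le_div_iff₀ hS2pos hS1pos]
    have key : kerK A2 xi x * ∑ xj ∈ S, kerK A1 xj x ≤
        (c ^ 2 * kerK A1 xi x) * (c ^ 2 * ∑ xj ∈ S, kerK A2 xj x) :=
      mul_le_mul (hK2 xi) hsum1 (le_of_lt hS1pos) (by positivity)
    calc c⁻¹ ^ 4 * kerK A2 xi x * ∑ xj ∈ S, kerK A1 xj x
        = c⁻¹ ^ 4 * (kerK A2 xi x * ∑ xj ∈ S, kerK A1 xj x) := by ring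
      _ ≤ c⁻¹ ^ 4 * ((c ^ 2 * kerK A1 xi x) * (c ^ 2 * ∑ xj ∈ S, kerK A2 xj x)) :=
          mul_le_mul_of_nonneg_left key (by positivity)
      _ = (c⁻¹ * c) ^ 4 * (kerK A1 xi x * ∑ xj ∈ S, kerK A2 xj x) := by ring
      _ = kerK A1 xi x * ∑ xj ∈ S, kerK A2 xj x := by
          rw [inv_mul_cancel₀ (ne_of_gt hc0)]; ring
  · unfold pWeight
    rw [mul_div_assoc', div_le_div_iff₀ hS1pos hS2pos]
    have key : kerK A1 xi x * ∑ xj ∈ S, kerK A2 xj x ≤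
        (c ^ 2 * kerK A2 xi x) * (c ^ 2 * ∑ xj ∈ S, kerK A1 xj x) :=
      mul_le_mul (hK1 xi) hsum2 (le_of_lt hS2pos) (by positivity)
    calc kerK A1 xi x * ∑ xj ∈ S, kerK A2 xj x
        ≤ (c ^ 2 * kerK A2 xi x) * (c ^ 2 * ∑ xj ∈ S, kerK A1 xj x) := key
      _ = c ^ 4 * kerK A2 xi x * ∑ xj ∈ S, kerK A1 xj x := by ring
end

section
/- Let f : G → [0,1] be L-Lipschitz (w.r.t. ℓ∞) on a grid G ⊂ [0,l]^d of mesh ε/(3L), and let f̂ : G → {0, ε/3, 2ε/3, …, 1} round each value f(x) to the nearest multiple of ε/3. Then f̂ is L-Lipschitz on G: for all x,y ∈ G, |f̂(x)−f̂(y)| ≤ L‖x−y‖_∞. -/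
theorem stmt12 (d : ℕ) (hd : 1 ≤ d) (L l ε : ℝ) (hL : 0 < L) (hl : 0 < l)
    (hε : ε ∈ Set.Ioc (0:ℝ) 1) (hεint : ∃ m : ℕ, (m : ℝ) = 3 / ε)
    (G : Set (Fin d → ℝ))
    (hG : G = {x | (∀ i, x i ∈ Set.Icc (0:ℝ) l) ∧
      ∀ i, ∃ k : ℕ, x i = (k : ℝ) * (ε / (3 * L))})
    (f : (Fin d → ℝ) → ℝ)
    (hf : ∀ x ∈ G, ∀ y ∈ G, |f x - f y| ≤ L * dist x y)
    (hfr : ∀ x ∈ G, f x ∈ Set.Icc (0:ℝ) 1)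
    (fhat : (Fin d → ℝ) → ℝ)
    -- `fhat` rounds `f` to the nearest multiple of `ε/3`, ties rounded down
    (hfhat : ∀ x, fhat x = (⌈f x / (ε / 3) - 1 / 2⌉ : ℝ) * (ε / 3)) :
    ∀ x ∈ G, ∀ y ∈ G, |fhat x - fhat y| ≤ L * dist x y := by
  intro x hx y hy
  have hε0 : (0:ℝ) < ε := hε.1
  have hc : (0:ℝ) < ε / 3 := by linarith
  -- dist x y is a multiple of ε/(3L)
  obtain ⟨k, hk⟩ : ∃ k : ℕ, dist x y = (k : ℝ) * (ε / (3 * L)) := by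
    have hne : (Finset.univ : Finset (Fin d)).Nonempty := by
      have : Nonempty (Fin d) := ⟨⟨0, hd⟩⟩
      exact Finset.univ_nonempty
    obtain ⟨i, _, hi⟩ := Finset.exists_mem_eq_sup Finset.univ hne
      (fun i => nndist (x i) (y i))
    have hdxy : dist x y = dist (x i) (y i) := by
      rw [dist_pi_def, hi]; rfl
    rw [hG] at hx hy
    obtain ⟨a, ha⟩ := hx.2 i
    obtain ⟨b, hb⟩ := hy.2 i
    refine ⟨((a : ℤ) - b).natAbs, ?_⟩
    rw [hdxy, Real.dist_eq, ha, hb, ← sub_mul, abs_mul,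
      abs_of_pos (by positivity : (0:ℝ) < ε / (3 * L))]
    congr 1
    rw [← Int.cast_natCast, Nat.cast_natAbs]
    push_cast
    ring_nf
  -- L * dist x y = k * (ε/3)
  have hLd : L * dist x y = (k : ℝ) * (ε / 3) := by
    rw [hk]; field_simp
  set c := ε / 3 with hcdef
  set u := f x / c - 1 / 2 with hu
  set v := f y / c - 1 / 2 with hv
  have huv : |u - v| ≤ (k : ℝ) := by
    have h1 : u - v = (f x - f y) / c := by rw [hu, hv]; field_simp; ring
    rw [h1, abs_div, abs_of_pos hc, div_le_iff₀ hc]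
    calc |f x - f y| ≤ L * dist x y := hf x hx y hy
      _ = (k : ℝ) * c := hLd
  have hceil : |(⌈u⌉ : ℝ) - (⌈v⌉ : ℝ)| ≤ (k : ℝ) := by
    have h1 : ⌈u⌉ - ⌈v⌉ ≤ (k : ℤ) := by
      have : v ≥ u - k := by
        have := abs_le.1 huv
        linarith [this.1]
      have h2 : ⌈u - (k:ℤ)⌉ ≤ ⌈v⌉ := Int.ceil_le_ceil (by push_cast; linarith)
      rw [Int.ceil_sub_intCast] at h2
      omega
    have h2 : ⌈v⌉ - ⌈u⌉ ≤ (k : ℤ) := by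
      have : u ≥ v - k := by
        have := abs_le.1 huv
        linarith [this.2]
      have h2 : ⌈v - (k:ℤ)⌉ ≤ ⌈u⌉ := Int.ceil_le_ceil (by push_cast; linarith)
      rw [Int.ceil_sub_intCast] at h2
      omega
    have : |⌈u⌉ - ⌈v⌉| ≤ (k : ℤ) := abs_le.2 ⟨by omega, h1⟩
    calc |(⌈u⌉ : ℝ) - (⌈v⌉ : ℝ)| = ((|⌈u⌉ - ⌈v⌉| : ℤ) : ℝ) := by push_cast; rfl
      _ ≤ ((k : ℤ) : ℝ) := by exact_mod_cast this
      _ = (k : ℝ) := by push_cast; rfl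
  rw [hfhat x, hfhat y, hLd, ← sub_mul, abs_mul, abs_of_pos hc]
  exact mul_le_mul_of_nonneg_right hceil hc.le
end
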